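/- Let σ be the surface measure on the unit sphere S^{md-1} ⊂ ℝ^{md} with the decay estimate |σ̂(ζ)| ≤ C(1+|ζ|)^{-(md-1)/2}. Then for each j ≥ 0, the Littlewood–Paley piece σ_j (with σ̂_j(ζ) = ψ(2^{-j}|ζ|)σ̂(ζ)) satisfies sup_{ξ ∈ ℝ^d} ( ∫_{ℝ^{(m-1)d}} |σ̂_j(ξ/m + η¹, …, ξ/m + η^{m-1}, ξ/m − Ση^j)|² dη )^{1/2} ≤ C' 2^{-jγ} with γ = (md-1)/2 − (m-1)d/2. -/

import Mathlib

open MeasureTheory Real Set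

noncomputable section

/-- `ℝ^d` with its Euclidean structure. -/
abbrev E (d : ℕ) : Type := EuclideanSpace ℝ (Fin d)

/-- The parametrization `ρ(ξ,η) = (ξ/m + η¹, …, ξ/m + η^{m-1}, ξ/m − Σᵢ ηⁱ)` of the
anti-diagonal fiber through `(ξ/m, …, ξ/m)` in `(ℝ^{md})*`, with
`η = (η¹,…,η^{m-1}) ∈ ℝ^{(m-1)d}`. -/
def rho (m d : ℕ) (ξ : E d) (η : EuclideanSpace ℝ (Fin (m - 1) × Fin d)) :
    EuclideanSpace ℝ (Fin m × Fin d) :=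
  (EuclideanSpace.equiv (Fin m × Fin d) ℝ).symm fun p =>
    if h : (p.1 : ℕ) < m - 1 then ξ p.2 / m + η (⟨p.1, h⟩, p.2)
    else ξ p.2 / m - ∑ i : Fin (m - 1), η (i, p.2)

lemma rho_apply (m d : ℕ) (ξ : E d) (η : EuclideanSpace ℝ (Fin (m - 1) × Fin d))
    (p : Fin m × Fin d) :
    rho m d ξ η p = if h : (p.1 : ℕ) < m - 1 then ξ p.2 / m + η (⟨p.1, h⟩, p.2)
    else ξ p.2 / m - ∑ i : Fin (m - 1), η (i, p.2) := rfl

lemma coord_abs_le_norm {ι : Type*} [Fintype ι] (x : EuclideanSpace ℝ ι) (i : ι) :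
    |x i| ≤ ‖x‖ := by
  rw [EuclideanSpace.norm_eq, ← Real.sqrt_sq (abs_nonneg (x i))]
  simp only [Real.norm_eq_abs]
  exact Real.sqrt_le_sqrt (Finset.single_le_sum (f := fun i => ‖x i‖ ^ 2)
    (fun _ _ => sq_nonneg _) (Finset.mem_univ i))

lemma rho_sum (m d : ℕ) (hm : 2 ≤ m) (ξ : E d)
    (η : EuclideanSpace ℝ (Fin (m - 1) × Fin d)) (k : Fin d) :
    ∑ p : Fin m, rho m d ξ η (p, k) = ξ k := by
  set g : ℕ → ℝ := fun n => if h : n < m - 1 then ξ k / m + η (⟨n, h⟩, k)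
    else ξ k / m - ∑ i : Fin (m - 1), η (i, k) with hg
  have h1 : ∀ p : Fin m, rho m d ξ η (p, k) = g p := fun p => rfl
  have hm1 : m - 1 + 1 = m := Nat.succ_pred_eq_of_pos (by omega : 0 < m)
  calc ∑ p : Fin m, rho m d ξ η (p, k) = ∑ n ∈ Finset.range m, g n := by
        simp only [h1]; exact Fin.sum_univ_eq_sum_range g m
    _ = ∑ n ∈ Finset.range (m - 1), g n + g (m - 1) := by
        rw [← hm1, Finset.sum_range_succ, hm1]
    _ = ∑ i : Fin (m - 1), g i + g (m - 1) := by
        rw [Fin.sum_univ_eq_sum_range g (m - 1)]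
    _ = ∑ i : Fin (m - 1), (ξ k / m + η (i, k)) + g (m - 1) := by
        congr 1
        refine Finset.sum_congr rfl fun i _ => ?_
        rw [hg]; simp only [i.isLt, dif_pos]
    _ = ξ k := by
        rw [hg]
        simp only [lt_irrefl (m - 1), dif_neg, not_lt.2 (le_refl (m - 1)), ↓reduceDIte]
        rw [Finset.sum_add_distrib, Finset.sum_const, Finset.card_univ, Fintype.card_fin,
          nsmul_eq_mul]
        have hmr : (m : ℝ) ≠ 0 := by positivity
        have : ((m - 1 : ℕ) : ℝ) = (m : ℝ) - 1 := by
          push_cast [Nat.cast_sub (by omega : 1 ≤ m)]; ring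
        rw [this]; field_simp; ring

lemma eta_coord_le (m d : ℕ) (hm : 2 ≤ m) (ξ : E d)
    (η : EuclideanSpace ℝ (Fin (m - 1) × Fin d)) (q : Fin (m - 1) × Fin d) :
    |η q| ≤ 2 * ‖rho m d ξ η‖ := by
  set r := rho m d ξ η with hr
  have hcoord : ∀ p : Fin m × Fin d, |r p| ≤ ‖r‖ := fun p => coord_abs_le_norm r p
  have hquot : |ξ q.2 / m| ≤ ‖r‖ := by
    have hsum := rho_sum m d hm ξ η q.2
    have hmr : (0:ℝ) < m := by positivity
    have : |ξ q.2| ≤ (m : ℝ) * ‖r‖ := by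
      calc |ξ q.2| = |∑ p : Fin m, r (p, q.2)| := by rw [hsum]
        _ ≤ ∑ p : Fin m, |r (p, q.2)| := Finset.abs_sum_le_sum_abs _ _
        _ ≤ ∑ _p : Fin m, ‖r‖ := Finset.sum_le_sum fun p _ => hcoord (p, q.2)
        _ = (m : ℝ) * ‖r‖ := by
            rw [Finset.sum_const, Finset.card_univ, Fintype.card_fin, nsmul_eq_mul]
    rw [abs_div, abs_of_pos hmr, div_le_iff₀ hmr]
    calc |ξ q.2| ≤ (m : ℝ) * ‖r‖ := this
      _ = ‖r‖ * m := by ring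
  have hlt : (q.1 : ℕ) < m := lt_of_lt_of_le q.1.isLt (Nat.sub_le m 1)
  have happ : r (⟨(q.1 : ℕ), hlt⟩, q.2) = ξ q.2 / m + η (q.1, q.2) := by
    rw [hr, rho_apply]
    simp only [q.1.isLt, dif_pos]
  have : η q = r (⟨(q.1 : ℕ), hlt⟩, q.2) - ξ q.2 / m := by
    rw [happ]; ring_nf
  rw [this]
  calc |r (⟨(q.1 : ℕ), hlt⟩, q.2) - ξ q.2 / m| ≤ |r (⟨(q.1 : ℕ), hlt⟩, q.2)| + |ξ q.2 / m| :=
        abs_sub _ _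
    _ ≤ ‖r‖ + ‖r‖ := add_le_add (hcoord _) hquot
    _ = 2 * ‖r‖ := by ring

lemma eta_norm_le (m d : ℕ) (hm : 2 ≤ m) (ξ : E d)
    (η : EuclideanSpace ℝ (Fin (m - 1) × Fin d)) :
    ‖η‖ ≤ 2 * Real.sqrt ((m - 1) * d : ℕ) * ‖rho m d ξ η‖ := by
  set r := rho m d ξ η with hr
  have hb : ∀ q : Fin (m - 1) × Fin d, ‖η q‖ ^ 2 ≤ (2 * ‖r‖) ^ 2 := by
    intro q
    have := eta_coord_le m d hm ξ η q
    have h0 : (0:ℝ) ≤ |η q| := abs_nonneg _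
    rw [Real.norm_eq_abs]
    exact pow_le_pow_left₀ h0 this 2
  calc ‖η‖ = √(∑ q : Fin (m - 1) × Fin d, ‖η q‖ ^ 2) := EuclideanSpace.norm_eq η
    _ ≤ √(∑ _q : Fin (m - 1) × Fin d, (2 * ‖r‖) ^ 2) :=
        Real.sqrt_le_sqrt (Finset.sum_le_sum fun q _ => hb q)
    _ = √((((m - 1) * d : ℕ) : ℝ) * (2 * ‖r‖) ^ 2) := by
        rw [Finset.sum_const, Finset.card_univ, Fintype.card_prod, Fintype.card_fin,
          Fintype.card_fin, nsmul_eq_mul]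
    _ = 2 * Real.sqrt ((m - 1) * d : ℕ) * ‖r‖ := by
        rw [Real.sqrt_mul (Nat.cast_nonneg _), Real.sqrt_sq (by positivity)]
        ring


/-- Littlewood–Paley decay of the spherical measure in the mixed norm `Λ^{H₀}_{2,∞}`:
if `σ̂` satisfies `|σ̂(ζ)| ≤ C (1+|ζ|)^{-(md-1)/2}` (the sphere `S^{md-1}` decay) and `ψ` is a
bump supported in `[1/2, 4]`, then the Littlewood–Paley pieces
`σ̂_j(ζ) = ψ(2^{-j}|ζ|) σ̂(ζ)` satisfy
`sup_ξ (∫_{ℝ^{(m-1)d}} |σ̂_j(ρ(ξ,η))|² dη)^{1/2} ≤ C' 2^{-jγ}`,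
`γ = (md-1)/2 − (m-1)d/2`. -/
theorem stmt12 (m d : ℕ) (hm : 2 ≤ m) (hd : 1 ≤ d)
    (S : EuclideanSpace ℝ (Fin m × Fin d) → ℂ) (C : ℝ) (hC : 0 ≤ C)
    (hdecay : ∀ ζ, ‖S ζ‖ ≤ C * (1 + ‖ζ‖) ^ (-(((m * d : ℕ) : ℝ) - 1) / 2))
    (ψ : ℝ → ℝ) (hψsupp : ∀ x, x ∉ Icc (1 / 2 : ℝ) 4 → ψ x = 0) (hψbd : ∀ x, |ψ x| ≤ 1)
    (γ : ℝ) (hγ : γ = (((m * d : ℕ) : ℝ) - 1) / 2 - ((m : ℝ) - 1) * d / 2) :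
    ∃ C' : ℝ, 0 < C' ∧
      ∀ (j : ℕ) (ξ : E d),
        (∫ η : EuclideanSpace ℝ (Fin (m - 1) × Fin d),
            ‖((ψ ((2 : ℝ) ^ (-(j : ℝ)) * ‖rho m d ξ η‖) : ℝ) : ℂ) * S (rho m d ξ η)‖ ^ 2) ^
          ((1 : ℝ) / 2) ≤ C' * 2 ^ (-(j : ℝ) * γ) := by
  classical
  set X := EuclideanSpace ℝ (Fin (m - 1) × Fin d)
  set N : ℕ := (m - 1) * d with hNdef
  set α : ℝ := (((m * d : ℕ) : ℝ) - 1) / 2 with hαdef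
  have hα0 : 0 ≤ α := by
    have : (2 : ℕ) ≤ m * d := le_trans hm (Nat.le_mul_of_pos_right m (by omega))
    have : (2 : ℝ) ≤ ((m * d : ℕ) : ℝ) := by exact_mod_cast this
    rw [hαdef]; linarith
  have hNcast : ((N : ℕ) : ℝ) = ((m : ℝ) - 1) * d := by
    rw [hNdef]; push_cast [Nat.cast_sub (by omega : 1 ≤ m)]; ring
  have hγ' : γ = α - (N : ℝ) / 2 := by rw [hγ, hαdef, hNcast]
  set R : ℝ := 8 * Real.sqrt N with hRdef
  have hR0 : 0 ≤ R := by positivity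
  set V : ℝ := (volume (Metric.ball (0 : X) 1)).toReal with hVdef
  have hV0 : 0 ≤ V := ENNReal.toReal_nonneg
  set K : ℝ := C * 2 ^ α * R ^ ((N : ℝ) / 2) * V ^ ((1 : ℝ) / 2) with hKdef
  have hK0 : 0 ≤ K := by
    apply mul_nonneg; apply mul_nonneg; apply mul_nonneg hC
    · exact (Real.rpow_nonneg (by norm_num) _)
    · exact Real.rpow_nonneg hR0 _
    · exact Real.rpow_nonneg hV0 _
  refine ⟨max 1 K, lt_of_lt_of_le one_pos (le_max_left _ _), ?_⟩
  intro j ξ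
  set rj : ℝ := R * 2 ^ (j : ℝ) with hrjdef
  have hrj0 : 0 ≤ rj := by positivity
  set aj : ℝ := 2 ^ (α - (j : ℝ) * α) with hajdef
  have haj0 : 0 ≤ aj := Real.rpow_nonneg (by norm_num) _
  set cj : ℝ := (C * aj) ^ 2 with hcjdef
  have hcj0 : 0 ≤ cj := sq_nonneg _
  set f : X → ℝ := fun η =>
    ‖((ψ ((2 : ℝ) ^ (-(j : ℝ)) * ‖rho m d ξ η‖) : ℝ) : ℂ) * S (rho m d ξ η)‖ ^ 2 with hfdef
  set g : X → ℝ := (Metric.closedBall (0 : X) rj).indicator (fun _ => cj) with hgdef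
  have h2j : (0 : ℝ) < 2 ^ (j : ℝ) := Real.rpow_pos_of_pos two_pos _
  -- pointwise bound
  have hfg : ∀ η : X, f η ≤ g η := by
    intro η
    by_cases hψ0 : ψ ((2 : ℝ) ^ (-(j : ℝ)) * ‖rho m d ξ η‖) = 0
    · simp only [hfdef, hψ0]
      simp only [Complex.ofReal_zero, zero_mul, norm_zero]
      rw [zero_pow (by norm_num)]
      exact Set.indicator_nonneg (fun _ _ => hcj0) η
    · have hmem : (2 : ℝ) ^ (-(j : ℝ)) * ‖rho m d ξ η‖ ∈ Icc (1 / 2 : ℝ) 4 := by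
        by_contra h; exact hψ0 (hψsupp _ h)
      set t : ℝ := ‖rho m d ξ η‖ with htdef
      have ht0 : 0 ≤ t := norm_nonneg _
      have hinv : (2 : ℝ) ^ (-(j : ℝ)) = ((2 : ℝ) ^ (j : ℝ))⁻¹ := by
        rw [Real.rpow_neg (by norm_num)]
      have hub : t ≤ 4 * 2 ^ (j : ℝ) := by
        have := hmem.2
        rw [hinv, inv_mul_le_iff₀ h2j] at this
        linarith [this]
      have hlbt : 2 ^ (j : ℝ) / 2 ≤ t := by
        have := hmem.1
        rw [hinv, le_inv_mul_iff₀ h2j] at this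
        linarith [this]
      have hlb : (2 : ℝ) ^ ((j : ℝ) - 1) ≤ 1 + t := by
        rw [Real.rpow_sub (by norm_num), Real.rpow_one]
        linarith
      have hηmem : η ∈ Metric.closedBall (0 : X) rj := by
        rw [Metric.mem_closedBall, dist_zero_right]
        calc ‖η‖ ≤ 2 * Real.sqrt N * t := eta_norm_le m d hm ξ η
          _ ≤ 2 * Real.sqrt N * (4 * 2 ^ (j : ℝ)) := by
              apply mul_le_mul_of_nonneg_left hub (by positivity)
          _ = rj := by rw [hrjdef, hRdef]; ring
      have hS : ‖S (rho m d ξ η)‖ ≤ C * aj := by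
        have h1 := hdecay (rho m d ξ η)
        have h2 : (1 + t) ^ (-(((m * d : ℕ) : ℝ) - 1) / 2) ≤ aj := by
          have hexp : (-(((m * d : ℕ) : ℝ) - 1) / 2) = -α := by rw [hαdef]; ring
          rw [hexp]
          calc (1 + t) ^ (-α) ≤ ((2 : ℝ) ^ ((j : ℝ) - 1)) ^ (-α) :=
                Real.rpow_le_rpow_of_nonpos (Real.rpow_pos_of_pos two_pos _) hlb
                  (neg_nonpos.2 hα0)
            _ = aj := by
                rw [hajdef, ← Real.rpow_mul (by norm_num : (0:ℝ) ≤ 2)]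
                congr 1; ring
        calc ‖S (rho m d ξ η)‖ ≤ C * (1 + t) ^ (-(((m * d : ℕ) : ℝ) - 1) / 2) := h1
          _ ≤ C * aj := mul_le_mul_of_nonneg_left h2 hC
      have hfle : f η ≤ cj := by
        rw [hfdef, hcjdef]
        simp only [norm_mul, Complex.norm_real]
        apply pow_le_pow_left₀ (by positivity)
        have hψle : |ψ ((2 : ℝ) ^ (-(j : ℝ)) * t)| ≤ 1 := hψbd _
        calc |ψ ((2 : ℝ) ^ (-(j : ℝ)) * t)| * ‖S (rho m d ξ η)‖
            ≤ 1 * (C * aj) := mul_le_mul hψle hS (norm_nonneg _) one_pos.le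
          _ = C * aj := one_mul _
      rw [hgdef, Set.indicator_of_mem hηmem]
      exact hfle
  -- integrability of g
  have hgint : Integrable g volume := by
    rw [hgdef]
    apply IntegrableOn.integrable_indicator _ Metric.isClosed_closedBall.measurableSet
    exact integrableOn_const (measure_closedBall_lt_top).ne
  -- integral bound
  have hint : ∫ η : X, f η ≤ cj * (rj ^ N * V) := by
    calc ∫ η : X, f η ≤ ∫ η : X, g η :=
          integral_mono_of_nonneg (Filter.Eventually.of_forall fun η => by positivity)
            hgint (Filter.Eventually.of_forall hfg)
      _ = (volume (Metric.closedBall (0 : X) rj)).toReal • cj := by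
          rw [hgdef]; exact integral_indicator_const cj Metric.isClosed_closedBall.measurableSet
      _ = cj * (rj ^ N * V) := by
          rw [Measure.addHaar_closedBall _ _ hrj0]
          have hfr : Module.finrank ℝ X = N := by
            show Module.finrank ℝ (EuclideanSpace ℝ (Fin (m - 1) × Fin d)) = N
            rw [finrank_euclideanSpace, Fintype.card_prod, Fintype.card_fin, Fintype.card_fin]
          rw [hfr, ENNReal.toReal_mul, ENNReal.toReal_ofReal (by positivity), smul_eq_mul,
            hVdef]
          ring
  -- final computation
  have h1 : (∫ η : X, f η) ^ ((1 : ℝ) / 2) ≤ (cj * (rj ^ N * V)) ^ ((1 : ℝ) / 2) :=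
    Real.rpow_le_rpow (integral_nonneg fun η => by positivity) hint (by norm_num)
  have h2 : (cj * (rj ^ N * V)) ^ ((1 : ℝ) / 2) = K * 2 ^ (-(j : ℝ) * γ) := by
    rw [Real.mul_rpow hcj0 (by positivity), Real.mul_rpow (by positivity) hV0]
    have e1 : cj ^ ((1 : ℝ) / 2) = C * aj := by
      rw [hcjdef, ← Real.rpow_natCast (C * aj) 2, ← Real.rpow_mul (by positivity)]
      norm_num
    have e2 : (rj ^ N) ^ ((1 : ℝ) / 2) = R ^ ((N : ℝ) / 2) * 2 ^ ((j : ℝ) * ((N : ℝ) / 2)) := by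
      rw [← Real.rpow_natCast rj N, ← Real.rpow_mul hrj0, hrjdef,
        Real.mul_rpow hR0 (le_of_lt h2j), ← Real.rpow_mul (by norm_num : (0:ℝ) ≤ 2)]
      ring_nf
    rw [e1, e2, hKdef, hajdef]
    have e3 : (2:ℝ) ^ (α - (j:ℝ) * α) * 2 ^ ((j:ℝ) * ((N:ℝ) / 2)) =
        2 ^ α * 2 ^ (-(j:ℝ) * γ) := by
      rw [← Real.rpow_add two_pos, ← Real.rpow_add two_pos]
      congr 1
      rw [hγ']; ring
    linear_combination (C * R ^ ((N:ℝ) / 2) * V ^ ((1:ℝ) / 2)) * e3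
  calc (∫ η : X, f η) ^ ((1 : ℝ) / 2) ≤ K * 2 ^ (-(j : ℝ) * γ) := by rw [← h2]; exact h1
    _ ≤ max 1 K * 2 ^ (-(j : ℝ) * γ) :=
        mul_le_mul_of_nonneg_right (le_max_right 1 K) (Real.rpow_nonneg (by norm_num) _)
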